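/- If f ∈ C(X,ℝ) has a unique maximizing measure, then the correspondence g ↦ M_max(g) is upper semi-continuous at f in the strong sense: writing M_max(f) = {μ₀}, for every weak*-open set U ⊆ M containing μ₀ there exists δ > 0 such that for every g ∈ C(X,ℝ) with ‖g − f‖_∞ < δ one has M_max(g) ⊆ U. -/

import Mathlib

open MeasureTheory Topology Filter
open scoped NNReal

variable {X : Type*} [MetricSpace X] [CompactSpace X] [Nonempty X]
  [MeasurableSpace X] [BorelSpace X]

section Aux

open BoundedContinuousFunction
open scoped ENNReal

lemma integrable_cm (g : C(X, ℝ)) (ν : Measure X) [IsFiniteMeasure ν] :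
    Integrable g ν := by
  exact BoundedContinuousFunction.integrable ν (mkOfCompact g)

lemma abs_integral_le (g : C(X, ℝ)) (ν : Measure X) [IsProbabilityMeasure ν] :
    |∫ x, g x ∂ν| ≤ ‖g‖ := by
  simpa [Real.norm_eq_abs] using
    BoundedContinuousFunction.norm_integral_le_norm (μ := ν) (mkOfCompact g)

/-- Sequential compactness of the space of probability measures on a compact metric space. -/
theorem prob_exists_subseq_tendsto (μs : ℕ → ProbabilityMeasure X) :
    ∃ μ : ProbabilityMeasure X, ∃ φ : ℕ → ℕ, StrictMono φ ∧
      Tendsto (fun n => μs (φ n)) atTop (𝓝 μ) := by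
  obtain ⟨D, hD⟩ := TopologicalSpace.exists_dense_seq C(X, ℝ)
  -- diagonal extraction via the compact product of intervals
  let Φ : ℕ → (∀ k : ℕ, Set.Icc (-‖D k‖) ‖D k‖) := fun n k =>
    ⟨∫ x, D k x ∂(μs n : Measure X), by
      have h := abs_le.mp (abs_integral_le (D k) (μs n : Measure X))
      exact ⟨h.1, h.2⟩⟩
  obtain ⟨L, φ, hφ, hL⟩ := CompactSpace.tendsto_subseq Φ
  have hk : ∀ k : ℕ, Tendsto (fun n => ∫ x, D k x ∂(μs (φ n) : Measure X)) atTop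
      (𝓝 ((L k : ℝ))) := by
    intro k
    have h1 : Tendsto (fun n => (Φ (φ n)) k) atTop (𝓝 (L k)) := (tendsto_pi_nhds.mp hL) k
    exact (continuous_subtype_val.tendsto _).comp h1
  -- limits of integrals exist for every continuous function
  have key : ∀ g : C(X, ℝ), ∃ l : ℝ,
      Tendsto (fun n => ∫ x, g x ∂(μs (φ n) : Measure X)) atTop (𝓝 l) := by
    intro g
    apply cauchySeq_tendsto_of_complete
    rw [Metric.cauchySeq_iff]
    intro ε hε
    obtain ⟨k, hk'⟩ := Metric.denseRange_iff.mp hD g (ε/3) (by linarith)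
    have hc : CauchySeq (fun n => ∫ x, D k x ∂(μs (φ n) : Measure X)) := (hk k).cauchySeq
    rw [Metric.cauchySeq_iff] at hc
    obtain ⟨N, hN⟩ := hc (ε/3) (by linarith)
    refine ⟨N, fun m hm n hn => ?_⟩
    have bound : ∀ j : ℕ,
        dist (∫ x, g x ∂(μs (φ j) : Measure X)) (∫ x, D k x ∂(μs (φ j) : Measure X))
          ≤ dist g (D k) := by
      intro j
      rw [Real.dist_eq, ← integral_sub (integrable_cm g _) (integrable_cm (D k) _)]
      have : (∫ x, (g x - D k x) ∂(μs (φ j) : Measure X))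
          = ∫ x, (g - D k) x ∂(μs (φ j) : Measure X) := by
        simp [ContinuousMap.sub_apply]
      rw [this, dist_eq_norm]
      exact abs_integral_le (g - D k) _
    calc dist (∫ x, g x ∂(μs (φ m) : Measure X)) (∫ x, g x ∂(μs (φ n) : Measure X))
        ≤ dist (∫ x, g x ∂(μs (φ m) : Measure X)) (∫ x, D k x ∂(μs (φ m) : Measure X))
          + dist (∫ x, D k x ∂(μs (φ m) : Measure X)) (∫ x, D k x ∂(μs (φ n) : Measure X))
          + dist (∫ x, D k x ∂(μs (φ n) : Measure X)) (∫ x, g x ∂(μs (φ n) : Measure X)) :=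
        dist_triangle4 _ _ _ _
      _ < ε/3 + ε/3 + ε/3 := by
          have b1 := bound m
          have b2 := hN m hm n hn
          have b3 := bound n
          rw [dist_comm (∫ x, D k x ∂(μs (φ n) : Measure X)) (∫ x, g x ∂(μs (φ n) : Measure X))]
          linarith
      _ = ε := by ring
  choose Λ hΛ using key
  -- properties of the limit functional
  have hΛmono : ∀ g h : C(X, ℝ), (∀ x, g x ≤ h x) → Λ g ≤ Λ h := fun g h hgh =>
    le_of_tendsto_of_tendsto' (hΛ g) (hΛ h) fun n =>
      integral_mono (integrable_cm g _) (integrable_cm h _) hgh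
  have hΛ1 : Λ 1 = 1 := by
    refine tendsto_nhds_unique (hΛ 1) ?_
    have : (fun n => ∫ x, (1 : C(X, ℝ)) x ∂(μs (φ n) : Measure X)) = fun _ => (1 : ℝ) := by
      funext n; simp
    rw [this]; exact tendsto_const_nhds
  have hΛ0 : Λ 0 = 0 := by
    refine tendsto_nhds_unique (hΛ 0) ?_
    have : (fun n => ∫ x, (0 : C(X, ℝ)) x ∂(μs (φ n) : Measure X)) = fun _ => (0 : ℝ) := by
      funext n; simp
    rw [this]; exact tendsto_const_nhds
  have hΛadd : ∀ g h : C(X, ℝ), Λ (g + h) = Λ g + Λ h := by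
    intro g h
    have h2 := hΛ (g + h)
    have : (fun n => ∫ x, (g + h) x ∂(μs (φ n) : Measure X))
        = fun n => (∫ x, g x ∂(μs (φ n) : Measure X)) + ∫ x, h x ∂(μs (φ n) : Measure X) := by
      funext n
      rw [← integral_add (integrable_cm g _) (integrable_cm h _)]
      simp [ContinuousMap.add_apply]
    rw [this] at h2
    exact tendsto_nhds_unique h2 ((hΛ g).add (hΛ h))
  -- the Riesz content
  set A : TopologicalSpace.Compacts X → Set C(X, ℝ) := fun K =>
    {f | (∀ x, 0 ≤ f x) ∧ ∀ x ∈ (K : Set X), 1 ≤ f x} with hA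
  set S : TopologicalSpace.Compacts X → Set ℝ := fun K => Λ '' A K with hS
  have hmemA1 : ∀ K, (1 : C(X, ℝ)) ∈ A K := fun K =>
    ⟨fun x => by simp, fun x _ => by simp⟩
  have hSne : ∀ K, (S K).Nonempty := fun K => ⟨Λ 1, 1, hmemA1 K, rfl⟩
  have hSnonneg : ∀ K, ∀ a ∈ S K, (0:ℝ) ≤ a := by
    rintro K a ⟨f, hf, rfl⟩
    have := hΛmono 0 f (fun x => by simpa using hf.1 x)
    rwa [hΛ0] at this
  have hSbdd : ∀ K, BddBelow (S K) := fun K => ⟨0, fun a ha => hSnonneg K a ha⟩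
  have hSInf_nonneg : ∀ K, (0:ℝ) ≤ sInf (S K) := fun K => le_csInf (hSne K) (hSnonneg K)
  set lam : TopologicalSpace.Compacts X → ℝ≥0 := fun K => Real.toNNReal (sInf (S K)) with hlam
  have hlam_coe : ∀ K, (lam K : ℝ) = sInf (S K) := fun K =>
    Real.coe_toNNReal _ (hSInf_nonneg K)
  have hmono : ∀ K₁ K₂ : TopologicalSpace.Compacts X, (K₁ : Set X) ⊆ K₂ → lam K₁ ≤ lam K₂ :=
    fun K₁ K₂ h => Real.toNNReal_mono (csInf_le_csInf (hSbdd K₁) (hSne K₂)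
      (Set.image_mono fun f hf => ⟨hf.1, fun x hx => hf.2 x (h hx)⟩))
  have hsup_le : ∀ K₁ K₂, lam (K₁ ⊔ K₂) ≤ lam K₁ + lam K₂ := by
    intro K₁ K₂
    have key2 : ∀ a ∈ S K₁, ∀ b ∈ S K₂, sInf (S (K₁ ⊔ K₂)) ≤ a + b := by
      rintro _ ⟨f₁, hf₁, rfl⟩ _ ⟨f₂, hf₂, rfl⟩
      rw [← hΛadd]
      refine csInf_le (hSbdd _) ⟨f₁ + f₂, ⟨?_, ?_⟩, rfl⟩
      · intro x
        have h1 := hf₁.1 x; have h2 := hf₂.1 x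
        simp only [ContinuousMap.add_apply]; linarith
      · intro x hx
        rw [TopologicalSpace.Compacts.coe_sup] at hx
        rcases hx with hx | hx
        · have h1 := hf₁.2 x hx; have h2 := hf₂.1 x
          simp only [ContinuousMap.add_apply]; linarith
        · have h1 := hf₂.2 x hx; have h2 := hf₁.1 x
          simp only [ContinuousMap.add_apply]; linarith
    have h2 : sInf (S (K₁ ⊔ K₂)) ≤ sInf (S K₁) + sInf (S K₂) := by
      have h3 : ∀ b ∈ S K₂, sInf (S (K₁ ⊔ K₂)) - b ≤ sInf (S K₁) :=
        fun b hb => le_csInf (hSne K₁) fun a ha => sub_le_iff_le_add.2 (key2 a ha b hb)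
      have h4 : sInf (S (K₁ ⊔ K₂)) - sInf (S K₁) ≤ sInf (S K₂) :=
        le_csInf (hSne K₂) fun b hb => by linarith [h3 b hb]
      linarith
    calc lam (K₁ ⊔ K₂) ≤ Real.toNNReal (sInf (S K₁) + sInf (S K₂)) := Real.toNNReal_mono h2
      _ = lam K₁ + lam K₂ := Real.toNNReal_add (hSInf_nonneg K₁) (hSInf_nonneg K₂)
  have hsup_ge : ∀ K₁ K₂ : TopologicalSpace.Compacts X, Disjoint (K₁ : Set X) K₂ →
      lam K₁ + lam K₂ ≤ lam (K₁ ⊔ K₂) := by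
    intro K₁ K₂ hd
    obtain ⟨u, hu0, hu1, hu01⟩ := exists_continuous_zero_one_of_isClosed
      K₂.isCompact.isClosed K₁.isCompact.isClosed hd.symm
    rw [← NNReal.coe_le_coe]
    rw [NNReal.coe_add, hlam_coe, hlam_coe, hlam_coe]
    refine le_csInf (hSne _) ?_
    rintro _ ⟨f, hf, rfl⟩
    have hK₁sub : (K₁ : Set X) ⊆ (K₁ ⊔ K₂ : TopologicalSpace.Compacts X) := by
      rw [TopologicalSpace.Compacts.coe_sup]; exact Set.subset_union_left
    have hK₂sub : (K₂ : Set X) ⊆ (K₁ ⊔ K₂ : TopologicalSpace.Compacts X) := by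
      rw [TopologicalSpace.Compacts.coe_sup]; exact Set.subset_union_right
    have hfu : f * u ∈ A K₁ := by
      constructor
      · intro x; exact mul_nonneg (hf.1 x) (hu01 x).1
      · intro x hx
        have h1 : u x = 1 := hu1 hx
        have h2 := hf.2 x (hK₁sub hx)
        simp only [ContinuousMap.mul_apply, h1, mul_one]
        exact h2
    have hfu' : f * (1 - u) ∈ A K₂ := by
      constructor
      · intro x
        have := (hu01 x).2
        refine mul_nonneg (hf.1 x) ?_
        simp only [ContinuousMap.sub_apply, ContinuousMap.one_apply]
        linarith
      · intro x hx
        have h1 : u x = 0 := hu0 hx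
        have h2 := hf.2 x (hK₂sub hx)
        simp only [ContinuousMap.mul_apply, ContinuousMap.sub_apply,
          ContinuousMap.one_apply, h1, sub_zero, mul_one]
        exact h2
    have hsplit : f * u + f * (1 - u) = f := by ring
    calc sInf (S K₁) + sInf (S K₂) ≤ Λ (f * u) + Λ (f * (1 - u)) :=
        add_le_add (csInf_le (hSbdd _) ⟨_, hfu, rfl⟩) (csInf_le (hSbdd _) ⟨_, hfu', rfl⟩)
      _ = Λ f := by rw [← hΛadd, hsplit]
  set C : MeasureTheory.Content X :=
    { toFun := lam
      mono' := hmono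
      sup_disjoint' := fun K₁ K₂ hd _ _ => le_antisymm (hsup_le K₁ K₂) (hsup_ge K₁ K₂ hd)
      sup_le' := hsup_le } with hC
  have lam_top : lam ⊤ = 1 := by
    have h1 : sInf (S ⊤) = 1 := by
      apply le_antisymm
      · have := csInf_le (hSbdd ⊤) ⟨(1 : C(X, ℝ)), hmemA1 ⊤, rfl⟩
        rwa [hΛ1] at this
      · refine le_csInf (hSne ⊤) ?_
        rintro _ ⟨f, hf, rfl⟩
        have := hΛmono 1 f (fun x => by
          simpa using hf.2 x (by simp [TopologicalSpace.Compacts.coe_top]))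
        rwa [hΛ1] at this
    show Real.toNNReal (sInf (S ⊤)) = 1
    rw [h1]
    simp
  set ν : Measure X := C.measure with hνdef
  have hν_open : ∀ (G : Set X) (hG : IsOpen G), ν G = C.innerContent ⟨G, hG⟩ := by
    intro G hG
    rw [hνdef, C.measure_apply hG.measurableSet]
    exact C.outerMeasure_opens ⟨G, hG⟩
  have hν_univ : ν Set.univ = 1 := by
    rw [hν_open Set.univ isOpen_univ]
    have : C.innerContent ⟨Set.univ, isOpen_univ⟩ = C ⟨Set.univ, isCompact_univ⟩ :=
      C.innerContent_of_isCompact isCompact_univ isOpen_univ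
    rw [this]
    have : (⟨Set.univ, isCompact_univ⟩ : TopologicalSpace.Compacts X) = ⊤ := rfl
    rw [this]
    show ((C.toFun ⊤ : ℝ≥0) : ℝ≥0∞) = 1
    rw [show C.toFun ⊤ = lam ⊤ from rfl, lam_top]
    simp
  haveI hνprob : IsProbabilityMeasure ν := ⟨hν_univ⟩
  refine ⟨⟨ν, hνprob⟩, φ, hφ, MeasureTheory.tendsto_of_forall_isOpen_le_liminf ?_⟩
  intro G hG
  set c : ℕ → ℝ≥0 := fun i => (μs (φ i)) G with hc
  have hc_le_one : ∀ i, c i ≤ 1 := fun i => ProbabilityMeasure.apply_le_one _ _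
  set r : ℝ≥0 := atTop.liminf c with hr
  have hcoer : ((r : ℝ≥0) : ℝ) = atTop.liminf (fun i => (c i : ℝ)) := by
    refine Monotone.map_liminf_of_continuousAt (F := atTop)
      (fun a b h => NNReal.coe_le_coe.2 h) c NNReal.continuous_coe.continuousAt ?_ ?_
    · exact Filter.IsBoundedUnder.isCoboundedUnder_ge
        (isBoundedUnder_of ⟨1, fun i => hc_le_one i⟩)
    · exact isBoundedUnder_of ⟨0, fun i => zero_le⟩
  -- the per-compact bound
  have hlamK : ∀ K : TopologicalSpace.Compacts X, (K : Set X) ⊆ G → lam K ≤ r := by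
    intro K hK
    have hd : Disjoint Gᶜ (K : Set X) :=
      Set.disjoint_left.2 fun x hxc hxK => hxc (hK hxK)
    obtain ⟨u, hu0, hu1, hu01⟩ := exists_continuous_zero_one_of_isClosed
      hG.isClosed_compl K.isCompact.isClosed hd
    have huA : u ∈ A K := ⟨fun x => (hu01 x).1, fun x hx => le_of_eq (hu1 hx).symm⟩
    have hb : ∀ i, ∫ x, u x ∂(μs (φ i) : Measure X) ≤ (c i : ℝ) := by
      intro i
      have hpt : ∀ x, u x ≤ G.indicator (fun _ => (1:ℝ)) x := by
        intro x
        by_cases hx : x ∈ G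
        · rw [Set.indicator_of_mem hx]; exact (hu01 x).2
        · rw [Set.indicator_of_notMem hx]
          have : u x = 0 := hu0 hx
          rw [this]
      calc ∫ x, u x ∂(μs (φ i) : Measure X)
          ≤ ∫ x, G.indicator (fun _ => (1:ℝ)) x ∂(μs (φ i) : Measure X) :=
            integral_mono (integrable_cm u _)
              ((integrable_const (1:ℝ)).indicator hG.measurableSet) hpt
        _ = ((μs (φ i) : Measure X) G).toReal := by
            rw [integral_indicator_const _ hG.measurableSet]; simp; rfl
        _ = (c i : ℝ) := by
            rw [hc]
            rw [← ProbabilityMeasure.ennreal_coeFn_eq_coeFn_toMeasure, ENNReal.coe_toReal]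
    have hΛu_le : Λ u ≤ (r : ℝ) := by
      rw [hcoer]
      have h1 : atTop.liminf (fun n => ∫ x, u x ∂(μs (φ n) : Measure X)) = Λ u :=
        (hΛ u).liminf_eq
      rw [← h1]
      refine liminf_le_liminf (Eventually.of_forall hb) ?_ ?_
      · exact (hΛ u).isBoundedUnder_ge
      · exact Filter.IsBoundedUnder.isCoboundedUnder_ge
          (isBoundedUnder_of ⟨1, fun i => NNReal.coe_le_coe.2 (hc_le_one i)⟩)
    calc lam K ≤ Real.toNNReal (Λ u) := Real.toNNReal_mono (csInf_le (hSbdd K) ⟨u, huA, rfl⟩)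
      _ ≤ r := Real.toNNReal_le_iff_le_coe.2 hΛu_le
  -- conclude the liminf bound for the open set
  rw [← ENNReal.coe_le_coe, ProbabilityMeasure.ennreal_coeFn_eq_coeFn_toMeasure (⟨ν, hνprob⟩ : ProbabilityMeasure X)]
  show ν G ≤ (r : ℝ≥0∞)
  rw [hν_open G hG]
  rw [MeasureTheory.Content.innerContent]
  exact iSup₂_le fun K hK => ENNReal.coe_le_coe.2 (hlamK K hK)

/-- The space of probability measures on a compact metric space is compact. -/
theorem prob_compactSpace : CompactSpace (ProbabilityMeasure X) := by
  letI : MetricSpace (ProbabilityMeasure X) := TopologicalSpace.metrizableSpaceMetric _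
  rw [compactSpace_iff_seqCompactSpace]
  refine ⟨fun x _ => ?_⟩
  obtain ⟨μ, φ, hφ, h⟩ := prob_exists_subseq_tendsto x
  exact ⟨μ, Set.mem_univ _, φ, hφ, h⟩

end Aux

/-- The set of `T`-invariant Borel probability measures on `X`,
equipped (as a subtype) with the weak* topology. -/
def Minv (T : X → X) : Set (ProbabilityMeasure X) :=
  {μ | (μ : Measure X).map T = (μ : Measure X)}

/-- The integral of a continuous function against a probability measure. -/
noncomputable def intf (f : C(X, ℝ)) (μ : ProbabilityMeasure X) : ℝ :=
  ∫ x, f x ∂(μ : Measure X)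

/-- The maximum ergodic average `β(f) = sup {∫ f dμ : μ ∈ M}`. -/
noncomputable def beta (T : X → X) (f : C(X, ℝ)) : ℝ :=
  sSup (intf f '' Minv T)

/-- The set of `f`-maximizing measures. -/
def MMax (T : X → X) (f : C(X, ℝ)) : Set (ProbabilityMeasure X) :=
  {μ ∈ Minv T | intf f μ = beta T f}

section MainAux

lemma continuous_intf (f : C(X, ℝ)) : Continuous (intf f) :=
  MeasureTheory.ProbabilityMeasure.continuous_integral_boundedContinuousFunction
    (BoundedContinuousFunction.mkOfCompact f)

lemma abs_intf_le (f : C(X, ℝ)) (μ : ProbabilityMeasure X) : |intf f μ| ≤ ‖f‖ :=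
  abs_integral_le f (μ : Measure X)

lemma intf_sub (f g : C(X, ℝ)) (μ : ProbabilityMeasure X) :
    intf f μ - intf g μ = intf (f - g) μ := by
  rw [intf, intf, intf, ← integral_sub (integrable_cm f _) (integrable_cm g _)]
  simp [ContinuousMap.sub_apply]

lemma abs_intf_sub_le (f g : C(X, ℝ)) (μ : ProbabilityMeasure X) :
    |intf f μ - intf g μ| ≤ ‖f - g‖ := by
  rw [intf_sub]; exact abs_intf_le _ _

lemma bddAbove_intf (T : X → X) (f : C(X, ℝ)) : BddAbove (intf f '' Minv T) := by
  refine ⟨‖f‖, ?_⟩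
  rintro _ ⟨μ, _, rfl⟩
  exact le_of_abs_le (abs_intf_le f μ)

lemma intf_le_beta (T : X → X) (f : C(X, ℝ)) {μ : ProbabilityMeasure X} (hμ : μ ∈ Minv T) :
    intf f μ ≤ beta T f :=
  le_csSup (bddAbove_intf T f) ⟨μ, hμ, rfl⟩

lemma beta_le (T : X → X) (hM : (Minv T).Nonempty) (f : C(X, ℝ)) {a : ℝ}
    (h : ∀ μ ∈ Minv T, intf f μ ≤ a) : beta T f ≤ a := by
  refine csSup_le (hM.image _) ?_
  rintro _ ⟨μ, hμ, rfl⟩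
  exact h μ hμ

lemma isClosed_Minv (T : X → X) (hT : Continuous T) : IsClosed (Minv T) := by
  have heq : Minv T = {μ : ProbabilityMeasure X |
      μ.map hT.measurable.aemeasurable = μ} := by
    ext μ
    constructor
    · intro h
      apply MeasureTheory.ProbabilityMeasure.toMeasure_injective
      rw [MeasureTheory.ProbabilityMeasure.toMeasure_map]
      exact h
    · intro h
      have := congrArg (MeasureTheory.ProbabilityMeasure.toMeasure) h
      rw [MeasureTheory.ProbabilityMeasure.toMeasure_map] at this
      exact this
  rw [heq]
  exact isClosed_eq (MeasureTheory.ProbabilityMeasure.continuous_map hT) continuous_id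

end MainAux

/-- If `f` has a unique maximizing measure, the correspondence `g ↦ M_max(g)` is upper
semi-continuous at `f`: any weak*-open `U ⊆ M` containing `μ₀` absorbs `M_max(g)` for all
`g` uniformly close to `f`. -/
theorem MMax_usc_at_unique (T : X → X) (hT : Continuous T) (hM : (Minv T).Nonempty)
    (f : C(X, ℝ)) (μ₀ : Minv T) (huniq : MMax T f = {(μ₀ : ProbabilityMeasure X)}) :
    ∀ U : Set (Minv T), IsOpen U → μ₀ ∈ U →
      ∃ δ > (0 : ℝ), ∀ g : C(X, ℝ), ‖g - f‖ < δ →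
        ∀ μ : ProbabilityMeasure X, ∀ hμ : μ ∈ MMax T g, (⟨μ, hμ.1⟩ : Minv T) ∈ U := by
  intro U hU hμ₀U
  haveI := prob_compactSpace (X := X)
  obtain ⟨V, hV, hVU⟩ := isOpen_induced_iff.mp hU
  have hμ₀V : (μ₀ : ProbabilityMeasure X) ∈ V := by
    rw [← hVU] at hμ₀U; exact hμ₀U
  have hμ₀max : (μ₀ : ProbabilityMeasure X) ∈ MMax T f := by
    rw [huniq]; rfl
  -- the "bad" set
  set S : Set (ProbabilityMeasure X) := Minv T ∩ Vᶜ with hSdef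
  have hS_closed : IsClosed S := (isClosed_Minv T hT).inter hV.isClosed_compl
  have hS_compact : IsCompact S := hS_closed.isCompact
  -- key estimates between beta's
  have hbeta_ge : ∀ g : C(X, ℝ), beta T g ≥ intf g ↑μ₀ := fun g => intf_le_beta T g μ₀.2
  rcases Set.eq_empty_or_nonempty S with hSe | hSne
  · -- the open set contains everything
    refine ⟨1, one_pos, fun g _ μ hμ => ?_⟩
    rw [← hVU]
    have : μ ∈ V := by
      by_contra hμV
      have : μ ∈ S := ⟨hμ.1, hμV⟩
      rw [hSe] at this
      exact this
    exact this
  · obtain ⟨ν₀, hν₀S, hν₀max⟩ := hS_compact.exists_isMaxOn hSne (continuous_intf f).continuousOn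
    have hν₀lt : intf f ν₀ < beta T f := by
      rcases lt_or_eq_of_le (intf_le_beta T f hν₀S.1) with h | h
      · exact h
      · exfalso
        have : ν₀ ∈ MMax T f := ⟨hν₀S.1, h⟩
        rw [huniq] at this
        rw [Set.mem_singleton_iff] at this
        rw [this] at hν₀S
        exact hν₀S.2 hμ₀V
    set ε : ℝ := beta T f - intf f ν₀ with hε
    have hεpos : 0 < ε := by rw [hε]; linarith
    refine ⟨ε/3, by positivity, fun g hg μ hμ => ?_⟩
    rw [← hVU]
    show μ ∈ V
    by_contra hμV
    have hμS : μ ∈ S := ⟨hμ.1, hμV⟩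
    -- intf f μ ≤ intf f ν₀ = beta T f - ε
    have h1 : intf f μ ≤ beta T f - ε := by
      have := hν₀max hμS
      simp only [Set.mem_setOf_eq] at this
      rw [hε]; linarith [this]
    --但 intf f μ is close to beta T f
    have h2 : |intf g μ - intf f μ| ≤ ‖g - f‖ := abs_intf_sub_le g f μ
    have h3 : |intf g ↑μ₀ - intf f ↑μ₀| ≤ ‖g - f‖ := abs_intf_sub_le g f ↑μ₀
    have h4 : intf g μ = beta T g := hμ.2
    have h5 : beta T g ≥ intf g ↑μ₀ := hbeta_ge g
    have h6 : intf f ↑μ₀ = beta T f := hμ₀max.2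
    have habs2 := abs_le.mp h2
    have habs3 := abs_le.mp h3
    linarith
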